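/- Let f and f' be holomorphic functions on ℍ×ℂ and let k, m, k', m' be integers. Then for every M ∈ SL(2,ℤ): ( m'(∂_z f)·f' − m·f·(∂_z f') )|_{k+k'+1, m+m'} M = m'(∂_z(f|_{k,m}M))·(f'|_{k',m'}M) − m·(f|_{k,m}M)·(∂_z(f'|_{k',m'}M)). -/

import Mathlib

open Complex Real Finset

noncomputable section

/-- The upper half plane, as a subset of `ℂ`. -/
def UHP : Set ℂ := {τ : ℂ | 0 < τ.im}

/-- Partial derivative with respect to the first variable `τ`. -/
def dTau (f : ℂ → ℂ → ℂ) : ℂ → ℂ → ℂ := fun τ z => deriv (fun w => f w z) τ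

/-- Partial derivative with respect to the second variable `z`. -/
def dZ (f : ℂ → ℂ → ℂ) : ℂ → ℂ → ℂ := fun τ z => deriv (fun w => f τ w) z

/-- The heat operator `L_m = 8πim ∂/∂τ − ∂²/∂z²`. -/
def heatOp (m : ℤ) (f : ℂ → ℂ → ℂ) : ℂ → ℂ → ℂ :=
  fun τ z => 8 * (π : ℂ) * I * (m : ℂ) * dTau f τ z - dZ (dZ f) τ z

/-- The weight `k`, index `m` slash action of `SL(2,ℤ)` on functions `ℍ × ℂ → ℂ`. -/
def jacobiSlash (k m : ℤ) (M : Matrix.SpecialLinearGroup (Fin 2) ℤ) (f : ℂ → ℂ → ℂ) :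
    ℂ → ℂ → ℂ := fun τ z =>
  ((M.1 1 0 : ℂ) * τ + (M.1 1 1 : ℂ)) ^ (-k) *
    Complex.exp (2 * (π : ℂ) * I * (m : ℂ) *
      (-((M.1 1 0 : ℂ) * z ^ 2) / ((M.1 1 0 : ℂ) * τ + (M.1 1 1 : ℂ)))) *
    f (((M.1 0 0 : ℂ) * τ + (M.1 0 1 : ℂ)) / ((M.1 1 0 : ℂ) * τ + (M.1 1 1 : ℂ)))
      (z / ((M.1 1 0 : ℂ) * τ + (M.1 1 1 : ℂ)))

/-- The index `m` action of the lattice `ℤ²` on functions `ℍ × ℂ → ℂ`. -/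
def latticeSlash (m : ℤ) (Y : ℤ × ℤ) (f : ℂ → ℂ → ℂ) : ℂ → ℂ → ℂ := fun τ z =>
  Complex.exp (2 * (π : ℂ) * I * (m : ℂ) * ((Y.1 : ℂ) ^ 2 * τ + 2 * (Y.1 : ℂ) * z)) *
    f τ (z + (Y.1 : ℂ) * τ + (Y.2 : ℂ))

/-- A Jacobi form of weight `k` and index `m`: a holomorphic function on `ℍ × ℂ`,
invariant under both slash actions, with a Fourier expansion supported on
`n ≥ 0`, `r² ≤ 4nm`. -/
structure IsJacobiForm (k m : ℤ) (f : ℂ → ℂ → ℂ) : Prop where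
  holo : DifferentiableOn ℂ (fun p : ℂ × ℂ => f p.1 p.2) {p : ℂ × ℂ | 0 < p.1.im}
  slash_invariant : ∀ M : Matrix.SpecialLinearGroup (Fin 2) ℤ, ∀ τ ∈ UHP, ∀ z : ℂ,
    jacobiSlash k m M f τ z = f τ z
  lattice_invariant : ∀ Y : ℤ × ℤ, ∀ τ ∈ UHP, ∀ z : ℂ,
    latticeSlash m Y f τ z = f τ z
  fourier : ∃ c : ℤ × ℤ → ℂ,
    (∀ n r : ℤ, (n < 0 ∨ 4 * n * m < r ^ 2) → c (n, r) = 0) ∧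
    ∀ τ ∈ UHP, ∀ z : ℂ,
      f τ z = ∑' nr : ℤ × ℤ, c nr *
        Complex.exp (2 * (π : ℂ) * I * ((nr.1 : ℂ) * τ + (nr.2 : ℂ) * z))

/-- The falling factorial `(x)_n = x(x−1)⋯(x−n+1)`. -/
def ffall (x : ℂ) (n : ℕ) : ℂ := ∏ i ∈ Finset.range n, (x - (i : ℂ))

/-- The combinatorial coefficients `C_{r,s,p}` appearing in the Rankin-Cohen brackets. -/
def Ccoef (α β γ : ℂ) (r s p : ℕ) : ℂ :=
  ffall (α + r + s + p) (s + p) / (r.factorial : ℂ) *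
    (ffall (β + r + s + p) (r + p) / (s.factorial : ℂ)) *
    (ffall (-(γ + (r : ℂ) + s + p)) (r + s) / (p.factorial : ℂ))

/-- The Rankin-Cohen bracket `[f,f']_{X,v}` of two Jacobi forms. -/
def jacobiRC (k k' m m' : ℤ) (X : ℂ) (v : ℕ) (f f' : ℂ → ℂ → ℂ) : ℂ → ℂ → ℂ :=
  fun τ z =>
    ∑ r ∈ Finset.range (v / 2 + 1), ∑ s ∈ Finset.range (v / 2 + 1 - r),
      ∑ i ∈ Finset.range (v % 2 + 1),
        Ccoef ((k : ℂ) - 3/2) ((k' : ℂ) - 3/2) ((k : ℂ) + (k' : ℂ) - 3/2 + ((v % 2 : ℕ) : ℂ))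
            r s (v / 2 - r - s) *
          ((m : ℂ) ^ (v % 2 - i) * (-(m' : ℂ)) ^ i * (1 + (m : ℂ) * X) ^ s *
            (1 - (m' : ℂ) * X) ^ r) *
          (heatOp (m + m'))^[v / 2 - r - s]
            (fun τ' z' =>
              (heatOp m)^[r] (dZ^[i] f) τ' z' * (heatOp m')^[s] (dZ^[v % 2 - i] f') τ' z') τ z


lemma denom_ne_zero' (M : Matrix.SpecialLinearGroup (Fin 2) ℤ) (τ : ℂ) (hτ : 0 < τ.im) :
    ((M.1 1 0 : ℂ) * τ + (M.1 1 1 : ℂ)) ≠ 0 := by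
  intro h
  by_cases hc : (M.1 1 0 : ℤ) = 0
  · rw [hc] at h
    simp at h
    have hdet := M.2
    rw [Matrix.det_fin_two] at hdet
    rw [hc, h] at hdet
    simp at hdet
  · have := congrArg Complex.im h
    simp [Complex.add_im, Complex.mul_im] at this
    rcases this with h1 | h2
    · exact hc (by exact_mod_cast h1)
    · exact absurd h2 (ne_of_gt hτ)

lemma im_moebius_pos' (M : Matrix.SpecialLinearGroup (Fin 2) ℤ) (τ : ℂ) (hτ : 0 < τ.im) :
    0 < ((((M.1 0 0 : ℂ) * τ + (M.1 0 1 : ℂ)) / ((M.1 1 0 : ℂ) * τ + (M.1 1 1 : ℂ)))).im := by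
  have hD := denom_ne_zero' M τ hτ
  have hsq : 0 < Complex.normSq ((M.1 1 0 : ℂ) * τ + (M.1 1 1 : ℂ)) :=
    Complex.normSq_pos.mpr hD
  have hdet := M.2
  rw [Matrix.det_fin_two] at hdet
  have hdetR : (M.1 0 0 : ℝ) * (M.1 1 1 : ℝ) - (M.1 0 1 : ℝ) * (M.1 1 0 : ℝ) = 1 := by
    exact_mod_cast hdet
  rw [Complex.div_im]
  simp only [Complex.add_im, Complex.add_re, Complex.mul_im, Complex.mul_re,
    Complex.intCast_im, Complex.intCast_re]
  rw [div_sub_div_same]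
  apply div_pos _ hsq
  nlinarith [hτ]

lemma dZ_jacobiSlash' (k m : ℤ) (M : Matrix.SpecialLinearGroup (Fin 2) ℤ) (f : ℂ → ℂ → ℂ)
    (hf : DifferentiableOn ℂ (fun p : ℂ × ℂ => f p.1 p.2) {p : ℂ × ℂ | 0 < p.1.im})
    (τ : ℂ) (hτ : τ ∈ UHP) (z : ℂ) :
    dZ (jacobiSlash k m M f) τ z =
      ((M.1 1 0 : ℂ) * τ + (M.1 1 1 : ℂ)) ^ (-k) *
        Complex.exp (2 * (π : ℂ) * I * (m : ℂ) *
          (-((M.1 1 0 : ℂ) * z ^ 2) / ((M.1 1 0 : ℂ) * τ + (M.1 1 1 : ℂ)))) *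
        ((-(4 * (π : ℂ) * I * (m : ℂ) * (M.1 1 0 : ℂ) * z /
              ((M.1 1 0 : ℂ) * τ + (M.1 1 1 : ℂ)))) *
            f (((M.1 0 0 : ℂ) * τ + (M.1 0 1 : ℂ)) / ((M.1 1 0 : ℂ) * τ + (M.1 1 1 : ℂ)))
              (z / ((M.1 1 0 : ℂ) * τ + (M.1 1 1 : ℂ))) +
          dZ f (((M.1 0 0 : ℂ) * τ + (M.1 0 1 : ℂ)) / ((M.1 1 0 : ℂ) * τ + (M.1 1 1 : ℂ)))
              (z / ((M.1 1 0 : ℂ) * τ + (M.1 1 1 : ℂ))) /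
            ((M.1 1 0 : ℂ) * τ + (M.1 1 1 : ℂ))) := by
  set c : ℂ := (M.1 1 0 : ℂ) with hc
  set d : ℂ := (M.1 1 1 : ℂ) with hd
  set D : ℂ := c * τ + d with hDdef
  set w : ℂ := ((M.1 0 0 : ℂ) * τ + (M.1 0 1 : ℂ)) / D with hw
  have hD : D ≠ 0 := denom_ne_zero' M τ hτ
  have him : 0 < w.im := im_moebius_pos' M τ hτ
  have hopen : IsOpen {p : ℂ × ℂ | 0 < p.1.im} :=
    isOpen_lt continuous_const (Complex.continuous_im.comp continuous_fst)
  have hfw : DifferentiableAt ℂ (fun p : ℂ × ℂ => f p.1 p.2) (w, z / D) :=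
    hf.differentiableAt (hopen.mem_nhds him)
  have hf2 : DifferentiableAt ℂ (fun y => f w y) (z / D) := by
    have : DifferentiableAt ℂ (fun y : ℂ => ((w, y) : ℂ × ℂ)) (z / D) :=
      DifferentiableAt.prodMk (differentiableAt_const w) differentiableAt_id
    exact hfw.comp (z / D) this
  have h1 : HasDerivAt (fun z' : ℂ => f w (z' / D)) (dZ f w (z / D) * (1 / D)) z := by
    have hin : HasDerivAt (fun z' : ℂ => z' / D) (1 / D) z := by
      simpa using (hasDerivAt_id z).div_const D
    have := HasDerivAt.comp z (hf2.hasDerivAt) hin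
    simp only [dZ, one_div] at this ⊢
    exact this
  have h2 : HasDerivAt (fun z' : ℂ => Complex.exp (2 * (π : ℂ) * I * (m : ℂ) * (-(c * z' ^ 2) / D)))
      (Complex.exp (2 * (π : ℂ) * I * (m : ℂ) * (-(c * z ^ 2) / D)) *
        (2 * (π : ℂ) * I * (m : ℂ) * (-(c * (2 * z)) / D))) z := by
    have hp : HasDerivAt (fun z' : ℂ => z' ^ 2) (2 * z) z := by
      simpa using hasDerivAt_pow 2 z
    have hu : HasDerivAt (fun z' : ℂ => 2 * (π : ℂ) * I * (m : ℂ) * (-(c * z' ^ 2) / D))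
        (2 * (π : ℂ) * I * (m : ℂ) * (-(c * (2 * z)) / D)) z :=
      (((hp.const_mul c).neg.div_const D).const_mul (2 * (π : ℂ) * I * (m : ℂ)))
    exact hu.cexp
  have h3 := (h2.const_mul (D ^ (-k))).mul h1
  have hfun : (fun z' : ℂ => jacobiSlash k m M f τ z') =
      fun z' : ℂ => D ^ (-k) * Complex.exp (2 * (π : ℂ) * I * (m : ℂ) * (-(c * z' ^ 2) / D)) *
        f w (z' / D) := rfl
  have hderiv : dZ (jacobiSlash k m M f) τ z =
      D ^ (-k) * (Complex.exp (2 * (π : ℂ) * I * (m : ℂ) * (-(c * z ^ 2) / D)) *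
        (2 * (π : ℂ) * I * (m : ℂ) * (-(c * (2 * z)) / D))) * f w (z / D) +
      D ^ (-k) * Complex.exp (2 * (π : ℂ) * I * (m : ℂ) * (-(c * z ^ 2) / D)) *
        (dZ f w (z / D) * (1 / D)) := by
    simp only [dZ]
    rw [hfun]
    exact h3.deriv
  rw [hderiv]
  ring

/-- **Covariance of the first-order bracket under the `SL(2,ℤ)` slash action**
(Lemma 3 of Choie-Eholzer): for `f`, `f'` holomorphic on `ℍ × ℂ` and any `M ∈ SL(2,ℤ)`,
`(m'(∂_z f) f' − m f (∂_z f'))|_{k+k'+1,m+m'} M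
  = m'(∂_z(f|_{k,m}M))(f'|_{k',m'}M) − m (f|_{k,m}M)(∂_z(f'|_{k',m'}M))`. -/
theorem odd_bracket_slash (f f' : ℂ → ℂ → ℂ)
    (hf : DifferentiableOn ℂ (fun p : ℂ × ℂ => f p.1 p.2) {p : ℂ × ℂ | 0 < p.1.im})
    (hf' : DifferentiableOn ℂ (fun p : ℂ × ℂ => f' p.1 p.2) {p : ℂ × ℂ | 0 < p.1.im})
    (k m k' m' : ℤ) (M : Matrix.SpecialLinearGroup (Fin 2) ℤ)
    (τ : ℂ) (hτ : τ ∈ UHP) (z : ℂ) :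
    jacobiSlash (k + k' + 1) (m + m') M
        (fun τ' z' => (m' : ℂ) * dZ f τ' z' * f' τ' z' - (m : ℂ) * f τ' z' * dZ f' τ' z')
        τ z =
      (m' : ℂ) * dZ (jacobiSlash k m M f) τ z * jacobiSlash k' m' M f' τ z -
        (m : ℂ) * jacobiSlash k m M f τ z * dZ (jacobiSlash k' m' M f') τ z := by
  have hD : ((M.1 1 0 : ℂ) * τ + (M.1 1 1 : ℂ)) ≠ 0 := denom_ne_zero' M τ hτ
  rw [dZ_jacobiSlash' k m M f hf τ hτ z, dZ_jacobiSlash' k' m' M f' hf' τ hτ z]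
  simp only [jacobiSlash]
  set c : ℂ := (M.1 1 0 : ℂ)
  set D : ℂ := c * τ + (M.1 1 1 : ℂ) with hDdef
  set w : ℂ := ((M.1 0 0 : ℂ) * τ + (M.1 0 1 : ℂ)) / D with hw
  have hE : Complex.exp (2 * (π : ℂ) * I * ((m + m' : ℤ) : ℂ) * (-(c * z ^ 2) / D)) =
      Complex.exp (2 * (π : ℂ) * I * (m : ℂ) * (-(c * z ^ 2) / D)) *
        Complex.exp (2 * (π : ℂ) * I * (m' : ℂ) * (-(c * z ^ 2) / D)) := by
    rw [← Complex.exp_add]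
    congr 1
    push_cast
    ring
  have hP : D ^ (-(k + k' + 1)) = D ^ (-k) * D ^ (-k') * D⁻¹ := by
    rw [show -(k + k' + 1) = -k + (-k' + (-1)) by ring, zpow_add₀ hD, zpow_add₀ hD,
      zpow_neg_one, mul_assoc]
  rw [hE, hP]
  ring

end
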